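/- For any real numbers x, r with 0 < x ≤ π/2 and 0 < r ≤ π/2, the inequality x^2 - r^2 ≥ (2r/sin r)(cos r - cos x) holds, with equality if and only if x = r. -/

import Mathlib

open Real

lemma key_sin {a b : ℝ} (ha : 0 < a) (hab : a < b) (hb : b ≤ π) :
    a * Real.sin b < b * Real.sin a := by
  have hb0 : 0 < b := ha.trans hab
  have hpi : (0:ℝ) ≤ π := Real.pi_pos.le
  have h := strictConcaveOn_sin_Icc.2 (show (0:ℝ) ∈ Set.Icc (0:ℝ) π by simp [hpi])
    (show b ∈ Set.Icc (0:ℝ) π from ⟨hb0.le, hb⟩) (hb0.ne)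
    (show (0:ℝ) < 1 - a / b by have : a / b < 1 := (div_lt_one hb0).2 hab; linarith)
    (show (0:ℝ) < a / b by positivity) (by ring)
  simp only [smul_eq_mul, mul_zero, Real.sin_zero, zero_add] at h
  have hab' : a / b * b = a := div_mul_cancel₀ a hb0.ne'
  rw [hab'] at h
  -- h : (1 - a/b) * 0 + a/b * sin b < sin a, after simp: a/b * sin b < sin a
  have h' : a / b * Real.sin b < Real.sin a := by linarith
  have := (div_lt_iff₀ hb0).1 (by rw [div_mul_eq_mul_div] at h'; exact h')
  linarith

theorem stmt3 (x r : ℝ) (hx : x ∈ Set.Ioc 0 (π / 2)) (hr : r ∈ Set.Ioc 0 (π / 2)) :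
    x ^ 2 - r ^ 2 ≥ (2 * r / Real.sin r) * (Real.cos r - Real.cos x) ∧
      (x ^ 2 - r ^ 2 = (2 * r / Real.sin r) * (Real.cos r - Real.cos x) ↔ x = r) := by
  obtain ⟨hx0, hx2⟩ := hx
  obtain ⟨hr0, hr2⟩ := hr
  have hpi : π / 2 < π := by linarith [Real.pi_pos]
  have hsr : 0 < Real.sin r := Real.sin_pos_of_pos_of_lt_pi hr0 (lt_of_le_of_lt hr2 hpi)
  set c : ℝ := 2 * r / Real.sin r with hc
  have hcpos : 0 < c := by positivity
  set f : ℝ → ℝ := fun t => t ^ 2 - r ^ 2 + c * (Real.cos t - Real.cos r) with hf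
  have hderiv : ∀ t : ℝ, HasDerivAt f (2 * t - c * Real.sin t) t := by
    intro t
    have h1 : HasDerivAt (fun s : ℝ => s ^ 2) (2 * t) t := by
      simpa using hasDerivAt_pow 2 t
    have h2 : HasDerivAt Real.cos (-Real.sin t) t := Real.hasDerivAt_cos t
    have := (h1.sub_const (r ^ 2)).add (((h2).sub_const (Real.cos r)).const_mul c)
    exact this.congr_deriv (by ring)
  have hcont : ∀ s : Set ℝ, ContinuousOn f s := fun s x _ =>
    (hderiv x).continuousAt.continuousWithinAt
  have hderiv' : ∀ t : ℝ, deriv f t = 2 * t - c * Real.sin t := fun t => (hderiv t).deriv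
  -- f strictly increasing on [r, π/2]
  have hmono : StrictMonoOn f (Set.Icc r (π / 2)) := by
    apply strictMonoOn_of_deriv_pos (convex_Icc _ _) (hcont _)
    intro t ht
    rw [interior_Icc] at ht
    rw [hderiv' t]
    have hkey := key_sin hr0 ht.1 (le_of_lt (ht.2.trans hpi))
    have hst : 0 < Real.sin t :=
      Real.sin_pos_of_pos_of_lt_pi (hr0.trans ht.1) (ht.2.trans hpi)
    have : c * Real.sin t < 2 * t := by
      rw [hc, div_mul_eq_mul_div, div_lt_iff₀ hsr]
      nlinarith
    linarith
  -- f strictly decreasing on [0, r]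
  have hanti : StrictAntiOn f (Set.Icc 0 r) := by
    apply strictAntiOn_of_deriv_neg (convex_Icc _ _) (hcont _)
    intro t ht
    rw [interior_Icc] at ht
    rw [hderiv' t]
    have hkey := key_sin ht.1 ht.2 (le_of_lt (lt_of_le_of_lt hr2 hpi))
    have : 2 * t < c * Real.sin t := by
      rw [hc, div_mul_eq_mul_div, lt_div_iff₀ hsr]
      nlinarith
    linarith
  have hfr : f r = 0 := by simp [hf]
  have hpos : ∀ x' ∈ Set.Ioc (0:ℝ) (π / 2), x' ≠ r → 0 < f x' := by
    intro y hy hne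
    rcases lt_or_gt_of_ne hne with h | h
    · have := hanti ⟨hy.1.le, h.le⟩ ⟨hr0.le, le_refl r⟩ h
      rw [hfr] at this; exact this
    · have := hmono ⟨le_refl r, hr2⟩ ⟨h.le, hy.2⟩ h
      rw [hfr] at this; exact this
  have hfx : f x = x ^ 2 - r ^ 2 - c * (Real.cos r - Real.cos x) := by
    simp only [hf]; ring
  by_cases hxr : x = r
  · subst hxr
    constructor
    · have : f x = 0 := hfr
      rw [hfx] at this; linarith
    · constructor
      · intro _; rfl
      · intro _
        have : f x = 0 := hfr
        rw [hfx] at this; linarith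
  · have h0 : 0 < f x := hpos x ⟨hx0, hx2⟩ hxr
    rw [hfx] at h0
    refine ⟨by linarith, ⟨fun heq => absurd heq (by intro heq; linarith), fun heq => absurd heq hxr⟩⟩
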